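/- Let (G',H') = altan(G,H) be the altan of a graph G with attachment set H of odd size h, and let q be a kernel eigenvector of the adjacency matrix of G'. Then q(x_i) = 0 for all 1 ≤ i ≤ h (where x_1,...,x_h are the degree-3 vertices of the added perimeter cycle). -/

import Mathlib

open scoped Classical

/-- The nullity of a graph: dimension of the kernel of its real adjacency matrix. -/
noncomputable def nullity {V : Type*} [Fintype V] (G : SimpleGraph V) : ℕ :=
  letI := Classical.decEq V
  letI := Classical.decRel G.Adj
  Module.finrank ℝ ↥(LinearMap.ker (Matrix.toLin' (G.adjMatrix ℝ)))

/-- `q` is a kernel eigenvector of `G`: the sum of `q` over each neighbourhood is `0`. -/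
def IsKernelVector {V : Type*} [Fintype V] (G : SimpleGraph V) (q : V → ℝ) : Prop :=
  ∀ v : V, ∑ u : V, (if G.Adj v u then q u else 0) = 0

/-- Underlying relation of the altan construction: vertices are `V ⊕ (Fin h ⊕ Fin h)`,
where `Sum.inr (Sum.inl i)` is `x_{i+1}` and `Sum.inr (Sum.inr i)` is `y_{i+1}`
(0-indexed versions of the 1-indexed `x_i, y_i`). -/
def altanRel {V : Type*} {h : ℕ} [NeZero h] (G : SimpleGraph V) (H : Fin h → V) :
    (V ⊕ (Fin h ⊕ Fin h)) → (V ⊕ (Fin h ⊕ Fin h)) → Prop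
  | Sum.inl u, Sum.inl w => G.Adj u w
  | Sum.inl u, Sum.inr (Sum.inl i) => u = H i
  | Sum.inr (Sum.inl i), Sum.inr (Sum.inr j) => j = i ∨ i = j + 1
  | _, _ => False

/-- The altan of `(G, H)`. -/
def altan {V : Type*} {h : ℕ} [NeZero h] (G : SimpleGraph V) (H : Fin h → V) :
    SimpleGraph (V ⊕ (Fin h ⊕ Fin h)) :=
  SimpleGraph.fromRel (altanRel G H)

/-- The special vector: `s(y_i) = (-1)^i` (1-indexed), `0` elsewhere. -/
def specialVector (V : Type*) (h : ℕ) : (V ⊕ (Fin h ⊕ Fin h)) → ℝ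
  | Sum.inr (Sum.inr j) => (-1 : ℝ) ^ ((j : ℕ) + 1)
  | _ => 0

/-- The induced attachment set `H' = (y_1, ..., y_h)` of the altan. -/
def inducedAttachment (V : Type*) (h : ℕ) : Fin h → (V ⊕ (Fin h ⊕ Fin h)) :=
  fun i => Sum.inr (Sum.inr i)

/-- for odd attachment size, every kernel eigenvector of the altan vanishes
on all perimeter vertices x_1, ..., x_h. -/
theorem stmt5 {V : Type*} [Fintype V] {h : ℕ} [NeZero h] (hh : 2 ≤ h) (hodd : Odd h)
    (G : SimpleGraph V) (H : Fin h → V) (q : (V ⊕ (Fin h ⊕ Fin h)) → ℝ)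
    (hq : IsKernelVector (altan G H) q) :
    ∀ i : Fin h, q (Sum.inr (Sum.inl i)) = 0 := by
  set f : Fin h → ℝ := fun i => q (Sum.inr (Sum.inl i)) with hf
  have key : ∀ j : Fin h, f j + f (j + 1) = 0 := by
    intro j
    have hne : j ≠ j + 1 := by
      intro hj
      have h1 : (1 : Fin h) = 0 := left_eq_add.mp hj
      rw [Fin.one_eq_zero_iff] at h1
      omega
    have hy := hq (Sum.inr (Sum.inr j))
    rw [Fintype.sum_sum_type] at hy
    simp only [altan, SimpleGraph.fromRel_adj, altanRel] at hy
    rw [Fintype.sum_sum_type] at hy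
    simp only [altanRel, false_or, or_false, reduceCtorEq, ne_eq, not_false_iff, true_and,
      if_false, false_and, Finset.sum_const_zero, add_zero, zero_add, Sum.inr.injEq,
      not_false_eq_true, and_false] at hy
    have hsum : (∑ x : Fin h, if j = x ∨ x = j + 1 then q (Sum.inr (Sum.inl x)) else 0)
        = q (Sum.inr (Sum.inl j)) + q (Sum.inr (Sum.inl (j+1))) := by
      have hcond : ∀ x : Fin h, (j = x ∨ x = j + 1) ↔ x ∈ ({j, j+1} : Finset (Fin h)) := by
        intro x
        simp [eq_comm, or_comm]
      simp only [hcond]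
      rw [Finset.sum_ite_mem, Finset.univ_inter, Finset.sum_pair hne]
    rw [hsum] at hy
    exact hy
  have step : ∀ j : Fin h, f (j + 1) = -f j := fun j => by linarith [key j]
  open Fin.NatCast in
  have iter : ∀ (k : ℕ) (j : Fin h), f (j + (k : Fin h)) = (-1 : ℝ) ^ k * f j := by
    intro k
    induction k with
    | zero => intro j; simp
    | succ n ih =>
      intro j
      have : ((n + 1 : ℕ) : Fin h) = (n : Fin h) + 1 := by push_cast; ring
      rw [this, ← add_assoc, step, ih]
      ring
  intro i
  have h1 := iter h i
  rw [Fin.natCast_self, add_zero, Odd.neg_one_pow hodd] at h1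
  have : f i = 0 := by linarith
  exact this
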